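/- For 0 < δ < 1 and ν > 1, the sum over all k in ℤⁿ of e^{−2|k|δ}·|k|^ν is strictly less than (ν/e)^ν · (1+e)ⁿ / δ^{ν+n}. -/

import Mathlib

open Real

private lemma pi_hasSum {g : ℤ → ℝ} (hg0 : ∀ m, 0 ≤ g m) {T : ℝ} (hg : HasSum g T) :
    ∀ n : ℕ, HasSum (fun k : Fin n → ℤ => ∏ i, g (k i)) (T ^ n) := by
  intro n
  induction n with
  | zero => simpa using hasSum_fintype (fun k : Fin 0 → ℤ => ∏ i, g (k i))
  | succ n ih =>
      have hsummable : Summable fun p : ℤ × (Fin n → ℤ) => g p.1 * ∏ i, g (p.2 i) :=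
        Summable.mul_of_nonneg (f := g) (g := fun k : Fin n → ℤ => ∏ i, g (k i))
          hg.summable ih.summable (fun m => hg0 m)
          (fun k => Finset.prod_nonneg fun i _ => hg0 _)
      have h2 : HasSum (fun p : ℤ × (Fin n → ℤ) => g p.1 * ∏ i, g (p.2 i)) (T * T ^ n) :=
        HasSum.mul (f := g) (g := fun k : Fin n → ℤ => ∏ i, g (k i)) hg ih hsummable
      have key : (fun p : ℤ × (Fin n → ℤ) => g p.1 * ∏ i, g (p.2 i))
          = (fun k : Fin (n + 1) → ℤ => ∏ i, g (k i)) ∘ (Fin.consEquiv fun _ => ℤ) := by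
        funext p
        simp [Fin.consEquiv, Fin.prod_univ_succ]
      rw [key] at h2
      rw [pow_succ']
      exact ((Fin.consEquiv fun _ => ℤ).hasSum_iff).mp h2

private lemma rpow_le_exp_aux (δ ν : ℝ) (hδ0 : 0 < δ) (hν0 : 0 < ν) :
    ∀ x : ℝ, 0 ≤ x → x ^ ν ≤ (ν / (Real.exp 1 * δ)) ^ ν * Real.exp (x * δ) := by
  set C : ℝ := ν / (Real.exp 1 * δ) with hC
  intro x hx
  rcases eq_or_lt_of_le hx with h | hx0
  · rw [← h, Real.zero_rpow hν0.ne']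
    positivity
  · set t : ℝ := x * δ / ν with ht
    have ht0 : 0 < t := by positivity
    have h1 : t ≤ Real.exp (t - 1) := by
      have := Real.add_one_le_exp (t - 1); linarith
    have h2 : t ^ ν ≤ Real.exp (t - 1) ^ ν := Real.rpow_le_rpow ht0.le h1 hν0.le
    have h3 : Real.exp (t - 1) ^ ν = Real.exp ((t - 1) * ν) := (Real.exp_mul _ _).symm
    have h4 : t ^ ν = x ^ ν * (δ / ν) ^ ν := by
      rw [← Real.mul_rpow hx (by positivity)]
      rw [ht]; congr 1; field_simp
    have h5 : (t - 1) * ν = x * δ - ν := by rw [ht]; field_simp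
    have h6 : x ^ ν * (δ / ν) ^ ν ≤ Real.exp (x * δ) * Real.exp (-ν) := by
      rw [← Real.exp_add]
      rw [h4, h3, h5] at h2
      convert h2 using 2; ring
    have hC' : C ^ ν = Real.exp (-ν) * (ν / δ) ^ ν := by
      rw [hC, show ν / (Real.exp 1 * δ) = Real.exp (-1) * (ν / δ) by
        rw [Real.exp_neg]; field_simp]
      rw [Real.mul_rpow (Real.exp_pos _).le (by positivity)]
      congr 1
      rw [← Real.exp_mul]; ring_nf
    have hdv : (δ / ν) ^ ν * (ν / δ) ^ ν = 1 := by
      rw [← Real.mul_rpow (by positivity) (by positivity),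
        show δ / ν * (ν / δ) = 1 by field_simp, Real.one_rpow]
    calc x ^ ν = x ^ ν * (δ / ν) ^ ν * (ν / δ) ^ ν := by
          rw [mul_assoc, hdv, mul_one]
      _ ≤ Real.exp (x * δ) * Real.exp (-ν) * (ν / δ) ^ ν :=
          mul_le_mul_of_nonneg_right h6 (by positivity)
      _ = C ^ ν * Real.exp (x * δ) := by rw [hC']; ring

theorem exp_sum_estimate (n : ℕ) (hn : 1 ≤ n) (δ ν : ℝ) (hδ0 : 0 < δ) (hδ1 : δ < 1)
    (hν : 1 < ν) :
    ∑' k : Fin n → ℤ,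
        Real.exp (-2 * ((∑ i, |k i| : ℤ) : ℝ) * δ) * (((∑ i, |k i| : ℤ) : ℝ)) ^ ν
      < (ν / Real.exp 1) ^ ν * (1 + Real.exp 1) ^ n / δ ^ (ν + n) := by
  have hν0 : 0 < ν := lt_trans one_pos hν
  set r : ℝ := Real.exp (-δ) with hr
  have hr0 : 0 < r := Real.exp_pos _
  have hr1 : r < 1 := Real.exp_lt_one_iff.mpr (by linarith)
  set g : ℤ → ℝ := fun m => r ^ m.natAbs with hgdef
  have hg0 : ∀ m, 0 ≤ g m := fun m => pow_nonneg hr0.le _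
  set T : ℝ := (1 - r)⁻¹ + r * (1 - r)⁻¹ with hTdef
  have hgT : HasSum g T := by
    have h1 : HasSum (fun m : ℕ => g m) (1 - r)⁻¹ := by
      simpa [hgdef] using hasSum_geometric_of_lt_one hr0.le hr1
    have h2 : HasSum (fun m : ℕ => g (-(m + 1))) (r * (1 - r)⁻¹) := by
      have h := (hasSum_geometric_of_lt_one hr0.le hr1).mul_left r
      have heq : (fun m : ℕ => g (-(m + 1))) = fun m : ℕ => r * r ^ m := by
        funext m
        have : (-((m : ℤ) + 1)).natAbs = m + 1 := by
          rw [show -((m : ℤ) + 1) = -(((m + 1 : ℕ) : ℤ)) by push_cast; ring,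
            Int.natAbs_neg, Int.natAbs_natCast]
        rw [hgdef]
        simp only [this, pow_succ]
        ring
      rw [heq]
      exact h
    exact h1.of_nat_of_neg_add_one h2
  set C : ℝ := ν / (Real.exp 1 * δ) with hC
  have hC0 : 0 < C := div_pos hν0 (mul_pos (Real.exp_pos 1) hδ0)
  have hCν0 : 0 < C ^ ν := Real.rpow_pos_of_pos hC0 ν
  -- the dominating function
  have hFsum : HasSum (fun k : Fin n → ℤ => C ^ ν * ∏ i, g (k i)) (C ^ ν * T ^ n) :=
    (pi_hasSum hg0 hgT n).mul_left _
  -- product of g's equals the exponential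
  have hprod : ∀ k : Fin n → ℤ,
      ∏ i, g (k i) = Real.exp (-(((∑ i, |k i| : ℤ) : ℝ) * δ)) := by
    intro k
    have h1 : ∏ i, g (k i) = r ^ (∑ i, (k i).natAbs) := by
      rw [hgdef]
      exact Finset.prod_pow_eq_pow_sum _ _ _
    have h2 : ((∑ i, |k i| : ℤ) : ℝ) = ((∑ i, (k i).natAbs : ℕ) : ℝ) := by
      have h2' : (∑ i, |k i| : ℤ) = ((∑ i, (k i).natAbs : ℕ) : ℤ) := by
        push_cast
        ring
      rw [h2']
      norm_cast
    rw [h1, h2, hr, ← Real.exp_nat_mul]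
    congr 1
    ring
  have hS0 : ∀ k : Fin n → ℤ, (0 : ℝ) ≤ ((∑ i, |k i| : ℤ) : ℝ) := by
    intro k
    have : (0 : ℤ) ≤ ∑ i, |k i| := Finset.sum_nonneg fun i _ => abs_nonneg _
    exact_mod_cast this
  -- pointwise bound
  have hle : ∀ k : Fin n → ℤ,
      Real.exp (-2 * ((∑ i, |k i| : ℤ) : ℝ) * δ) * (((∑ i, |k i| : ℤ) : ℝ)) ^ ν
        ≤ C ^ ν * ∏ i, g (k i) := by
    intro k
    set S : ℝ := ((∑ i, |k i| : ℤ) : ℝ) with hSdef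
    have hS : 0 ≤ S := hS0 k
    have hkey := rpow_le_exp_aux δ ν hδ0 hν0 S hS
    rw [hprod k]
    calc Real.exp (-2 * S * δ) * S ^ ν
        ≤ Real.exp (-2 * S * δ) * (C ^ ν * Real.exp (S * δ)) :=
          mul_le_mul_of_nonneg_left hkey (Real.exp_pos _).le
      _ = C ^ ν * Real.exp (-2 * S * δ + S * δ) := by
          rw [Real.exp_add]; ring
      _ = C ^ ν * Real.exp (-(S * δ)) := by
          congr 1
          ring
  -- summability of the left-hand side
  have hfsummable : Summable (fun k : Fin n → ℤ =>
      Real.exp (-2 * ((∑ i, |k i| : ℤ) : ℝ) * δ) * (((∑ i, |k i| : ℤ) : ℝ)) ^ ν) :=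
    Summable.of_nonneg_of_le
      (fun k => mul_nonneg (Real.exp_pos _).le (Real.rpow_nonneg (hS0 k) ν))
      hle hFsum.summable
  -- strict inequality at k = 0
  have hstrict : Real.exp (-2 * ((∑ i, |(0 : Fin n → ℤ) i| : ℤ) : ℝ) * δ)
      * (((∑ i, |(0 : Fin n → ℤ) i| : ℤ) : ℝ)) ^ ν
      < C ^ ν * ∏ i, g ((0 : Fin n → ℤ) i) := by
    have h0 : (∑ i, |(0 : Fin n → ℤ) i| : ℤ) = 0 := by simp
    have h1 : ∏ i, g ((0 : Fin n → ℤ) i) = 1 := by simp [hgdef]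
    rw [h0, h1]
    push_cast
    rw [Real.zero_rpow hν0.ne']
    simpa using hCν0
  have hlt : ∑' k : Fin n → ℤ,
      Real.exp (-2 * ((∑ i, |k i| : ℤ) : ℝ) * δ) * (((∑ i, |k i| : ℤ) : ℝ)) ^ ν
      < C ^ ν * T ^ n := by
    rw [← hFsum.tsum_eq]
    exact Summable.tsum_lt_tsum hle hstrict hfsummable hFsum.summable
  -- now bound C ^ ν * T ^ n by the right-hand side
  have hrT : 0 < 1 - r := by linarith
  have hT0 : 0 ≤ T := by positivity
  have hTle : T ≤ (1 + Real.exp 1) / δ := by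
    have hTeq : T = (1 + r) / (1 - r) := by
      rw [hTdef]; field_simp
    rw [hTeq, div_le_div_iff₀ hrT hδ0]
    have ha : δ * r ≤ 1 - r := by
      have h := Real.add_one_le_exp δ
      have := mul_le_mul_of_nonneg_right h hr0.le
      rw [← Real.exp_add] at this
      simp only [add_neg_cancel, Real.exp_zero] at this
      nlinarith
    have hc : 1 ≤ Real.exp 1 * r := by
      rw [hr, ← Real.exp_add]
      have : (0:ℝ) ≤ 1 - δ := by linarith
      calc (1:ℝ) = Real.exp 0 := (Real.exp_zero).symm
        _ ≤ Real.exp (1 + -δ) := Real.exp_le_exp.mpr (by linarith)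
    have hd1 : δ * (Real.exp 1 * r) ≥ δ := by nlinarith
    nlinarith [mul_le_mul_of_nonneg_left ha (by positivity : (0:ℝ) ≤ 1 + Real.exp 1)]
  have hTn : T ^ n ≤ ((1 + Real.exp 1) / δ) ^ n := pow_le_pow_left₀ hT0 hTle n
  have hfinal : C ^ ν * T ^ n ≤ (ν / Real.exp 1) ^ ν * (1 + Real.exp 1) ^ n / δ ^ (ν + n) := by
    have h1 : C ^ ν * T ^ n ≤ C ^ ν * ((1 + Real.exp 1) / δ) ^ n :=
      mul_le_mul_of_nonneg_left hTn hCν0.le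
    refine h1.trans_eq ?_
    have hCsplit : C ^ ν = (ν / Real.exp 1) ^ ν / δ ^ ν := by
      rw [hC, show ν / (Real.exp 1 * δ) = (ν / Real.exp 1) / δ by ring,
        Real.div_rpow (by positivity) hδ0.le]
    have hδsplit : δ ^ (ν + (n : ℝ)) = δ ^ ν * δ ^ n := by
      rw [Real.rpow_add hδ0, Real.rpow_natCast]
    rw [hCsplit, hδsplit, div_pow]
    have hδν : (0:ℝ) < δ ^ ν := Real.rpow_pos_of_pos hδ0 ν
    have hδn : (0:ℝ) < δ ^ n := pow_pos hδ0 n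
    field_simp
  exact hlt.trans_le hfinal
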